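/- For every m ≥ 1 there exists a constant C : ℕ such that for every L : ℕ, every nonempty finite set P of points of ℤ^m all of whose coordinates lie in the interval [0, L], and every p0 ∈ P, there exists a solution trajectory for (P, p0) in the racetrack model on ℤ^m having at most C·(L+1)^m configurations. -/

import Mathlib

namespace VTSP

/-- Chebyshev adjacency (allowing equality). -/
def Adj {m : ℕ} (a b : Fin m → ℤ) : Prop := ∀ j, |b j - a j| ≤ 1

lemma Adj.rfl {m : ℕ} (a : Fin m → ℤ) : Adj a a := fun j => by simp

lemma adj_cons {m : ℕ} {a b : Fin m → ℤ} {u w : ℤ} (h : |w - u| ≤ 1) (hab : Adj a b) :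
    Adj (Fin.cons u a) (Fin.cons w b) := by
  intro j
  refine Fin.cases ?_ ?_ j
  · simpa using h
  · intro i; simpa using hab i

lemma cons_zero_zero {m : ℕ} : (Fin.cons (0:ℤ) (0 : Fin m → ℤ) : Fin (m+1) → ℤ) = 0 := by
  funext j; refine Fin.cases ?_ ?_ j <;> simp

def sweep {m : ℕ} (b : List (Fin m → ℤ)) : ℕ → List (Fin (m+1) → ℤ)
  | 0 => b.map (Fin.cons (0:ℤ))
  | v+1 => sweep b v ++ b.map (Fin.cons (((v:ℕ)+1 : ℕ) : ℤ))

def down (m : ℕ) : ℕ → List (Fin (m+1) → ℤ)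
  | 0 => []
  | v+1 => Fin.cons ((v : ℕ) : ℤ) (0 : Fin m → ℤ) :: down m v

def snake : (m : ℕ) → ℕ → List (Fin m → ℤ)
  | 0, _ => [fun _ => 0]
  | m+1, L => sweep (snake m L) L ++ down m L

section
variable {m : ℕ} {b : List (Fin m → ℤ)}

lemma sweep_ne (hb : b ≠ []) (v : ℕ) : sweep b v ≠ [] := by
  cases v with
  | zero => simpa [sweep] using hb
  | succ v => simp [sweep, hb]

lemma sweep_head? (hb : b.head? = some (0 : Fin m → ℤ)) (v : ℕ) :
    (sweep b v).head? = some (Fin.cons (0:ℤ) (0 : Fin m → ℤ)) := by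
  induction v with
  | zero =>
      cases b with
      | nil => simp at hb
      | cons x xs =>
          simp only [List.head?_cons, Option.some.injEq] at hb
          simp [sweep, hb]
  | succ v ih =>
      have hne : sweep b v ≠ [] := by
        intro h; rw [h] at ih; simp at ih
      rw [sweep, List.head?_append]
      simp [ih]

lemma sweep_getLast? (hb : b ≠ []) (hl : b.getLast hb = 0) (v : ℕ) :
    (sweep b v).getLast? = some (Fin.cons ((v:ℕ):ℤ) (0 : Fin m → ℤ)) := by
  cases v with
  | zero =>
      rw [sweep, List.getLast?_eq_getLast (l := b.map _) (by simpa using hb)]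
      simp [List.getLast_map, hl]
  | succ v =>
      rw [sweep, List.getLast?_append,
        List.getLast?_eq_getLast (l := b.map _) (by simpa using hb)]
      simp [List.getLast_map, hl]

lemma sweep_chain (hb : b ≠ []) (hl : b.getLast hb = 0)
    (hh : b.head? = some (0 : Fin m → ℤ))
    (hc : List.Chain' Adj b) (v : ℕ) : List.Chain' Adj (sweep b v) := by
  have hmap : ∀ c : ℤ, List.Chain' Adj (b.map (Fin.cons c)) := by
    intro c
    unfold List.Chain' at hc ⊢
    rw [List.isChain_map]
    exact hc.imp (fun a b hab => adj_cons (by simp) hab)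
  induction v with
  | zero => exact hmap 0
  | succ v ih =>
      rw [sweep, List.Chain', List.isChain_append]
      refine ⟨ih, hmap _, ?_⟩
      intro x hx y hy
      rw [sweep_getLast? hb hl v] at hx
      rw [List.head?_map, hh] at hy
      simp only [Option.mem_def, Option.some.injEq, Option.map_some] at hx hy
      subst hx; subst hy
      refine adj_cons ?_ (Adj.rfl _)
      push_cast
      rw [show ((v:ℤ)+1 - v) = 1 by ring]
      simp

lemma sweep_mem {v u : ℕ} (hu : u ≤ v) {a : Fin m → ℤ} (ha : a ∈ b) :
    Fin.cons ((u:ℕ):ℤ) a ∈ sweep b v := by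
  induction v with
  | zero =>
      interval_cases u
      exact List.mem_map_of_mem ha
  | succ v ih =>
      rw [sweep, List.mem_append]
      rcases Nat.lt_or_ge u (v+1) with h | h
      · exact Or.inl (ih (by omega))
      · have : u = v + 1 := by omega
        subst this
        exact Or.inr (by exact_mod_cast List.mem_map_of_mem ha)

lemma sweep_length (v : ℕ) : (sweep b v).length = (v+1) * b.length := by
  induction v with
  | zero => simp [sweep]
  | succ v ih => simp [sweep, ih]; ring

end

lemma down_length (m v : ℕ) : (down m v).length = v := by
  induction v with
  | zero => rfl
  | succ v ih => simp [down, ih]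

lemma down_chain (m v : ℕ) : List.Chain' Adj (down m v) := by
  induction v with
  | zero => simp [down, List.Chain', List.isChain_nil]
  | succ v ih =>
      rw [down, List.Chain', List.isChain_cons]
      refine ⟨?_, ih⟩
      intro y hy
      cases v with
      | zero => simp [down] at hy
      | succ v =>
          rw [down] at hy
          simp only [List.head?_cons, Option.mem_def, Option.some.injEq] at hy
          subst hy
          refine adj_cons ?_ (Adj.rfl _)
          push_cast
          rw [show ((v:ℤ) - (v+1)) = -1 by ring]
          simp

lemma down_getLast? (m v : ℕ) (hv : v ≠ 0) :
    (down m v).getLast? = some (Fin.cons (0:ℤ) (0 : Fin m → ℤ)) := by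
  induction v with
  | zero => omega
  | succ v ih =>
      cases v with
      | zero => simp [down]
      | succ v =>
          rw [down, List.getLast?_cons, ih (by omega)]
          simp


lemma snake_ne (m L : ℕ) : snake m L ≠ [] := by
  cases m with
  | zero => simp [snake]
  | succ m =>
      rw [snake]
      have := sweep_ne (b := snake m L) (snake_ne m L) L
      intro h
      rcases List.append_eq_nil_iff.mp h with ⟨h1, _⟩
      exact this h1

lemma snake_head? (m L : ℕ) : (snake m L).head? = some (0 : Fin m → ℤ) := by
  induction m with
  | zero =>
      rw [snake]
      simp only [List.head?_cons, Option.some.injEq]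
      rfl
  | succ m ih =>
      rw [snake, List.head?_append]
      rw [sweep_head? ih L]
      simp [cons_zero_zero]

lemma snake_getLast? (m L : ℕ) : (snake m L).getLast? = some (0 : Fin m → ℤ) := by
  induction m with
  | zero =>
      rw [snake]
      simp only [List.getLast?_singleton, Option.some.injEq]
      rfl
  | succ m ih =>
      rw [snake, List.getLast?_append]
      have hgl : (snake m L).getLast (snake_ne m L) = 0 := by
        have := List.getLast?_eq_getLast (l := snake m L) (snake_ne m L)
        rw [ih] at this
        exact (Option.some.inj this).symm
      cases L with
      | zero =>
          rw [show down m 0 = [] from rfl]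
          simp only [List.getLast?_nil, Option.or, sweep_getLast? (snake_ne m 0) hgl 0]
          simp [cons_zero_zero]
      | succ L =>
          rw [down_getLast? m (L+1) (by omega)]
          simp [cons_zero_zero]

lemma snake_chain (m L : ℕ) : List.Chain' Adj (snake m L) := by
  induction m with
  | zero => simp [snake, List.Chain', List.isChain_singleton]
  | succ m ih =>
      have hgl : (snake m L).getLast (snake_ne m L) = 0 := by
        have := List.getLast?_eq_getLast (l := snake m L) (snake_ne m L)
        rw [snake_getLast? m L] at this
        exact (Option.some.inj this).symm
      rw [snake, List.Chain', List.isChain_append]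
      refine ⟨sweep_chain (snake_ne m L) hgl (snake_head? m L) ih L, down_chain m L, ?_⟩
      intro x hx y hy
      rw [sweep_getLast? (snake_ne m L) hgl L] at hx
      simp only [Option.mem_def, Option.some.injEq] at hx
      subst hx
      cases L with
      | zero => simp [down] at hy
      | succ L =>
          rw [show down m (L+1) = Fin.cons ((L:ℕ):ℤ) (0 : Fin m → ℤ) :: down m L from rfl,
            List.head?_cons] at hy
          simp only [Option.mem_def, Option.some.injEq] at hy
          subst hy
          refine adj_cons ?_ (Adj.rfl _)
          push_cast
          rw [show ((L:ℤ) - (L+1)) = -1 by ring]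
          simp

lemma snake_mem (m L : ℕ) (x : Fin m → ℤ) (hx : ∀ j, 0 ≤ x j ∧ x j ≤ (L:ℤ)) :
    x ∈ snake m L := by
  induction m with
  | zero =>
      rw [snake]
      simp only [List.mem_singleton]
      funext j
      exact absurd j.2 (by omega)
  | succ m ih =>
      have h0 := hx 0
      have htail : Fin.tail x ∈ snake m L := by
        apply ih
        intro j
        simpa [Fin.tail] using hx j.succ
      have hu : x 0 = (((x 0).toNat : ℕ) : ℤ) := (Int.toNat_of_nonneg h0.1).symm
      have hule : (x 0).toNat ≤ L := by omega
      have : Fin.cons (((x 0).toNat : ℕ) : ℤ) (Fin.tail x) ∈ sweep (snake m L) L :=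
        sweep_mem hule htail
      rw [snake, List.mem_append]
      left
      rwa [← hu, Fin.cons_self_tail] at this

lemma snake_length (m L : ℕ) : (snake m L).length + 1 ≤ 2 * (L+1)^m := by
  induction m with
  | zero => simp [snake]
  | succ m ih =>
      rw [snake, List.length_append, sweep_length, down_length]
      have : (L+1) * ((snake m L).length + 1) ≤ (L+1) * (2 * (L+1)^m) :=
        Nat.mul_le_mul_left _ ih
      calc (L + 1) * (snake m L).length + L + 1
          = (L+1) * ((snake m L).length + 1) := by ring
        _ ≤ (L+1) * (2 * (L+1)^m) := this
        _ = 2 * (L+1)^(m+1) := by ring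

end VTSP

/-- A trajectory of `k` configurations in the racetrack model on `ℤ^m`. -/
def IsTrajectory (m k : ℕ) (c : Fin k → (Fin m → ℤ) × (Fin m → ℤ)) : Prop :=
  ∀ (t : ℕ) (h : t + 1 < k),
    (c ⟨t + 1, h⟩).1 = (c ⟨t, by omega⟩).1 + (c ⟨t + 1, h⟩).2 ∧
    ∀ j : Fin m, |(c ⟨t + 1, h⟩).2 j - (c ⟨t, by omega⟩).2 j| ≤ 1

/-- A solution trajectory for `(P, p0)`: a trajectory of `k ≥ 1` configurations
starting and ending at `p0` with zero velocity, visiting every point of `P`. -/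
def IsSolution (m : ℕ) (P : Finset (Fin m → ℤ)) (p0 : Fin m → ℤ)
    (k : ℕ) (c : Fin k → (Fin m → ℤ) × (Fin m → ℤ)) : Prop :=
  IsTrajectory m k c ∧ 1 ≤ k ∧
  (∀ h : 0 < k,
    (c ⟨0, h⟩).1 = p0 ∧ (c ⟨0, h⟩).2 = 0 ∧
    (c ⟨k - 1, Nat.sub_lt h one_pos⟩).1 = p0 ∧
    (c ⟨k - 1, Nat.sub_lt h one_pos⟩).2 = 0) ∧
  (∀ q ∈ P, ∃ t : Fin k, (c t).1 = q)

/-- For cities with coordinates in `[0, L]` in `ℤ^m`, there is always a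
solution trajectory of `O((L+1)^m)` configurations. -/
theorem vtsp_solution_exists (m : ℕ) (hm : 1 ≤ m) :
    ∃ C : ℕ, ∀ (L : ℕ) (P : Finset (Fin m → ℤ)), P.Nonempty →
      (∀ q ∈ P, ∀ j : Fin m, 0 ≤ q j ∧ q j ≤ (L : ℤ)) →
      ∀ p0 ∈ P, ∃ k ≤ C * (L + 1) ^ m,
        ∃ c : Fin k → (Fin m → ℤ) × (Fin m → ℤ), IsSolution m P p0 k c := by
  classical
  refine ⟨4, ?_⟩
  intro L P hPne hbox p0 hp0
  set W := VTSP.snake m L with hW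
  have hWne : W ≠ [] := VTSP.snake_ne m L
  set M := W.length with hMdef
  have hM : 0 < M := List.length_pos_iff.mpr hWne
  have getcongr : ∀ {x y : ℕ} (hx : x < M) (hy : y < M), x = y →
      W.get ⟨x, hx⟩ = W.get ⟨y, hy⟩ := by
    intro x y hx hy h; subst h; rfl
  have hhead : W.get ⟨0, hM⟩ = 0 := by
    have h1 := List.head?_eq_head hWne
    rw [VTSP.snake_head?] at h1
    rw [List.get_mk_zero]
    exact (Option.some.inj h1).symm
  have hlast : W.get ⟨M - 1, by omega⟩ = 0 := by
    have h1 := List.getLast?_eq_getLast (l := W) hWne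
    rw [VTSP.snake_getLast?] at h1
    have h2 : W.getLast hWne = W.get ⟨M - 1, by omega⟩ := List.getLast_eq_getElem hWne
    rw [← h2]
    exact (Option.some.inj h1).symm
  have hp0W : p0 ∈ W := VTSP.snake_mem m L p0 (hbox p0 hp0)
  obtain ⟨i0, hi0⟩ := List.mem_iff_get.mp hp0W
  set q : ℕ → (Fin m → ℤ) := fun n => W.get ⟨(i0.val + n) % M, Nat.mod_lt _ hM⟩ with hq
  have hq0 : q 0 = p0 := by
    rw [hq]
    rw [← hi0]
    exact getcongr _ i0.isLt (by simpa using Nat.mod_eq_of_lt i0.isLt)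
  have hqM : q M = p0 := by
    rw [hq]
    rw [← hi0]
    refine getcongr _ i0.isLt ?_
    rw [Nat.add_mod_right]
    exact Nat.mod_eq_of_lt i0.isLt
  have hadj : ∀ n, VTSP.Adj (q n) (q (n + 1)) := by
    intro n
    have ha : (i0.val + n) % M < M := Nat.mod_lt _ hM
    have hnext : (i0.val + (n + 1)) % M = ((i0.val + n) % M + 1) % M := by
      rw [show i0.val + (n + 1) = (i0.val + n) + 1 by ring]
      conv_lhs => rw [Nat.add_mod]
      conv_rhs => rw [Nat.add_mod, Nat.mod_mod_of_dvd _ dvd_rfl]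
    by_cases hcase : (i0.val + n) % M + 1 < M
    · have h2 : ((i0.val + n) % M + 1) % M = (i0.val + n) % M + 1 :=
        Nat.mod_eq_of_lt hcase
      have hchain : List.Chain' VTSP.Adj W := VTSP.snake_chain m L
      have hc := List.isChain_iff_getElem.mp hchain ((i0.val + n) % M) (by omega)
      have e1 : q n = W.get ⟨(i0.val + n) % M, ha⟩ := rfl
      have e2 : q (n + 1) = W.get ⟨(i0.val + n) % M + 1, hcase⟩ := by
        rw [hq]
        exact getcongr _ hcase (by rw [hnext, h2])
      rw [e1, e2]
      exact hc
    · have haM : (i0.val + n) % M + 1 = M := by omega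
      have e1 : q n = W.get ⟨M - 1, by omega⟩ := by
        rw [hq]; exact getcongr _ (by omega) (by omega)
      have e2 : q (n + 1) = W.get ⟨0, hM⟩ := by
        rw [hq]
        refine getcongr _ hM ?_
        rw [hnext, haM, Nat.mod_self]
      rw [e1, e2, hhead, hlast]
      exact VTSP.Adj.rfl _
  have hvisit : ∀ x ∈ P, ∃ n < M, q n = x := by
    intro x hxP
    have hxW : x ∈ W := VTSP.snake_mem m L x (hbox x hxP)
    obtain ⟨i, hi⟩ := List.mem_iff_get.mp hxW
    refine ⟨(M + i.val - i0.val) % M, Nat.mod_lt _ hM, ?_⟩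
    rw [hq, ← hi]
    refine getcongr _ i.isLt ?_
    conv_lhs => rw [Nat.add_mod, Nat.mod_mod_of_dvd _ dvd_rfl]
    rw [← Nat.add_mod]
    have h1 : i0.val + (M + i.val - i0.val) = M + i.val := by
      have := i0.isLt; omega
    rw [h1, Nat.add_mod, Nat.mod_self, Nat.zero_add, Nat.mod_mod_of_dvd _ dvd_rfl,
      Nat.mod_eq_of_lt i.isLt]
  -- the trajectory
  have hbound : 2 * M + 1 ≤ 4 * (L + 1) ^ m := by
    have h := VTSP.snake_length m L
    rw [← hMdef] at h
    omega
  refine ⟨2 * M + 1, hbound, fun t =>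
    if t.val % 2 = 0 then (q (t.val / 2), 0)
    else (q (t.val / 2 + 1), q (t.val / 2 + 1) - q (t.val / 2)), ?_, by omega, ?_, ?_⟩
  · -- IsTrajectory
    intro t h
    by_cases ht : t % 2 = 0
    · have h1 : ¬ ((t + 1) % 2 = 0) := by omega
      have h2 : (t + 1) / 2 = t / 2 := by omega
      simp only [ht, h1, h2, if_true, if_false, if_pos, if_neg, not_false_iff]
      refine ⟨by abel, ?_⟩
      intro j
      simpa using hadj (t / 2) j
    · have h1 : (t + 1) % 2 = 0 := by omega
      have h2 : (t + 1) / 2 = t / 2 + 1 := by omega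
      simp only [ht, h1, h2, if_true, if_false, if_pos, if_neg, not_false_iff]
      refine ⟨by abel, ?_⟩
      intro j
      simp only [Pi.zero_apply, Pi.sub_apply, zero_sub, abs_neg]
      exact hadj (t / 2) j
  · -- endpoints
    intro hk
    have e1 : (2 * M + 1 - 1) % 2 = 0 := by omega
    have e2 : (2 * M + 1 - 1) / 2 = M := by omega
    simp only [e1, e2, if_pos, Nat.zero_mod, Nat.zero_div]
    exact ⟨hq0, trivial, hqM, trivial⟩
  · -- visits
    intro x hx
    obtain ⟨n, hn, hqn⟩ := hvisit x hx
    refine ⟨⟨2 * n, by omega⟩, ?_⟩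
    have e1 : (2 * n) % 2 = 0 := by omega
    have e2 : (2 * n) / 2 = n := by omega
    simp only [e1, e2, if_pos]
    exact hqn
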